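/- Let V : ℤ → ℤ[T,T⁻¹] satisfy the Jones recurrence V(e+2) = (T³ − T)·V(e+1) + T⁴·V(e) for all e : ℤ, and suppose V(e) ≠ 0 for every e. Then for every N : ℤ there exists e₀ such that for all e ≥ e₀ one has deg V(e) ≥ N; moreover there exists e₁ such that for all e ≥ e₁ the support of V(e) is contained in the nonnegative integers (V(e) is a polynomial in T). In particular deg V(e) → +∞ as e → +∞. -/

import Mathlib

/-- The degree of a Laurent polynomial `f`, viewed as a finitely supported function
`ℤ → ℤ`: the maximum of its support in `WithBot ℤ` (so `jdeg 0 = ⊥`). -/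
noncomputable def jdeg (f : LaurentPolynomial ℤ) : WithBot ℤ :=
  (AddMonoidAlgebra.coeff f : ℤ →₀ ℤ).support.max

section JonesAux
open LaurentPolynomial

lemma coeff_mul_T (f : LaurentPolynomial ℤ) (k n : ℤ) :
    (AddMonoidAlgebra.coeff (f * T k : LaurentPolynomial ℤ) : ℤ →₀ ℤ) n = (AddMonoidAlgebra.coeff f : ℤ →₀ ℤ) (n - k) := by
  have ht : (T k : LaurentPolynomial ℤ) = AddMonoidAlgebra.single k 1 := rfl
  rw [ht]
  simpa [sub_eq_add_neg] using AddMonoidAlgebra.coeff_mul_single_apply f 1 k n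

lemma add_apply' (f g : LaurentPolynomial ℤ) (n : ℤ) :
    (AddMonoidAlgebra.coeff (f + g : LaurentPolynomial ℤ) : ℤ →₀ ℤ) n = (AddMonoidAlgebra.coeff f : ℤ →₀ ℤ) n + (AddMonoidAlgebra.coeff g : ℤ →₀ ℤ) n := rfl

lemma smul_apply' (z : ℤ) (f : LaurentPolynomial ℤ) (n : ℤ) :
    (AddMonoidAlgebra.coeff ((z : LaurentPolynomial ℤ) * f : LaurentPolynomial ℤ) : ℤ →₀ ℤ) n = z * (AddMonoidAlgebra.coeff f : ℤ →₀ ℤ) n := by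
  rw [← zsmul_eq_mul]; rfl

lemma exists_lb (s : Finset ℤ) : ∃ a : ℤ, ∀ x ∈ s, a ≤ x := by
  rcases s.eq_empty_or_nonempty with h | h
  · exact ⟨0, by simp [h]⟩
  · exact ⟨s.min' h, fun x hx => s.min'_le x hx⟩

lemma exists_ub (s : Finset ℤ) : ∃ a : ℤ, ∀ x ∈ s, x ≤ a := by
  rcases s.eq_empty_or_nonempty with h | h
  · exact ⟨0, by simp [h]⟩
  · exact ⟨s.max' h, fun x hx => s.le_max' x hx⟩

theorem jones_key (V : ℤ → LaurentPolynomial ℤ)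
    (hV : ∀ e : ℤ, V (e + 2) = (T 3 - T 1) * V (e + 1) + T 4 * V e) :
    ∀ e : ℤ, (T 3 + T 1) * V e =
      (V 1 + T 1 * V 0) * T (3*e)
        + ((e.negOnePow : ℤ) : LaurentPolynomial ℤ) * ((T 3 * V 0 - V 1) * T e) := by
  set P : LaurentPolynomial ℤ := V 1 + T 1 * V 0 with hP
  set Q : LaurentPolynomial ℤ := T 3 * V 0 - V 1 with hQ
  set cL : ℤ → LaurentPolynomial ℤ := fun e => ((e.negOnePow : ℤ) : LaurentPolynomial ℤ) with hcL
  have hc : ∀ e : ℤ, cL (e+1) = - cL e := by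
    intro e; simp only [hcL, Int.negOnePow_succ, Units.val_neg, Int.cast_neg]
  have t2 : (T 2 : LaurentPolynomial ℤ) = T 1 * T 1 := by rw [← T_add]; norm_num
  have t4 : (T 4 : LaurentPolynomial ℤ) = T 3 * T 1 := by rw [← T_add]; norm_num
  have t6 : (T 6 : LaurentPolynomial ℤ) = T 3 * T 3 := by rw [← T_add]; norm_num
  have tm3 : (T 4 * T (-3) : LaurentPolynomial ℤ) = T 1 := by rw [← T_add]; norm_num
  have tm1 : (T 4 * T (-1) : LaurentPolynomial ℤ) = T 3 := by rw [← T_add]; norm_num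
  have base0 : (T 3 + T 1) * V 0 = P * T (3*(0:ℤ)) + cL 0 * (Q * T 0) := by
    norm_num [T_zero, hcL]
    linear_combination hP + hQ
  have base1 : (T 3 + T 1) * V 1 = P * T (3*(1:ℤ)) + cL 1 * (Q * T 1) := by
    norm_num [hcL]
    linear_combination (T 3) * hP - (T 1) * hQ
  have step2 : ∀ e : ℤ,
      ((T 3 + T 1) * V e = P * T (3*e) + cL e * (Q * T e)) →
      ((T 3 + T 1) * V (e+1) = P * T (3*(e+1)) + cL (e+1) * (Q * T (e+1))) →
      ((T 3 + T 1) * V (e+2) = P * T (3*(e+2)) + cL (e+2) * (Q * T (e+2))) := by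
    intro e h1 h2
    rw [show (3:ℤ)*(e+1) = 3*e+3 by ring, T_add, T_add e 1, hc] at h2
    have hc2 : cL (e+2) = cL e := by
      rw [show (e:ℤ)+2 = (e+1)+1 by ring, hc, hc, neg_neg]
    rw [hV e, show (3:ℤ)*(e+2) = 3*e+6 by ring, T_add, T_add e 2, hc2]
    linear_combination (T 3 - T 1) * h2 + T 4 * h1 - (P * T (3*e)) * t6
      + (P * T (3*e) + cL e * (Q * T e)) * t4 - (cL e * (Q * T e)) * t2
  have stepdown : ∀ e : ℤ,
      ((T 3 + T 1) * V e = P * T (3*e) + cL e * (Q * T e)) →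
      ((T 3 + T 1) * V (e+1) = P * T (3*(e+1)) + cL (e+1) * (Q * T (e+1))) →
      ((T 3 + T 1) * V (e-1) = P * T (3*(e-1)) + cL (e-1) * (Q * T (e-1))) := by
    intro e h1 h2
    rw [show (3:ℤ)*(e+1) = 3*e+3 by ring, T_add, T_add e 1, hc] at h2
    have hV' := hV (e-1)
    rw [show (e:ℤ)-1+2 = e+1 by ring, show (e:ℤ)-1+1 = e by ring] at hV'
    have hcm : cL (e-1) = - cL e := by
      have h := hc (e-1)
      rw [show (e:ℤ)-1+1 = e by ring] at h
      rw [h, neg_neg]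
    rw [hcm, show (3:ℤ)*(e-1) = 3*e-3 by ring, T_sub (3*e) 3, T_sub e 1]
    have h4 : (T 4 : LaurentPolynomial ℤ) ≠ 0 := (isUnit_T 4).ne_zero
    apply mul_left_cancel₀ h4
    linear_combination (-(T 3 + T 1)) * hV' + h2 - (T 3 - T 1) * h1
      - (P * T (3*e)) * tm3 + (cL e * (Q * T e)) * tm1
  have key2 : ∀ e : ℤ,
      ((T 3 + T 1) * V e = P * T (3*e) + cL e * (Q * T e)) ∧
      ((T 3 + T 1) * V (e+1) = P * T (3*(e+1)) + cL (e+1) * (Q * T (e+1))) := by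
    intro e
    induction e using Int.induction_on with
    | zero => exact ⟨base0, base1⟩
    | succ n ih =>
      refine ⟨ih.2, ?_⟩
      have h := step2 n ih.1 ih.2
      rwa [show ((n:ℤ)+1+1) = (n:ℤ)+2 by ring]
    | pred n ih =>
      refine ⟨stepdown _ ih.1 ih.2, ?_⟩
      rw [show (-(n:ℤ)-1+1) = -(n:ℤ) by ring]
      exact ih.1
  exact fun e => (key2 e).1

end JonesAux

open LaurentPolynomial in
/-- **Proposition 1.4** (algebraic form). If `V : ℤ → ℤ[T,T⁻¹]` satisfies the Jones
recurrence and `V e ≠ 0` for every `e`, then `deg V(e) → +∞` as `e → +∞`, and for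
all large `e` the support of `V e` consists of nonnegative integers (`V e` is a
polynomial in `T`). -/
theorem jones_degree_tendsto_atTop (V : ℤ → LaurentPolynomial ℤ)
    (hV : ∀ e : ℤ, V (e + 2) = (T 3 - T 1) * V (e + 1) + T 4 * V e)
    (hne : ∀ e : ℤ, V e ≠ 0) :
    (∀ N : ℤ, ∃ e₀ : ℤ, ∀ e : ℤ, e₀ ≤ e → (N : WithBot ℤ) ≤ jdeg (V e)) ∧
    (∃ e₁ : ℤ, ∀ e : ℤ, e₁ ≤ e → ∀ n ∈ (AddMonoidAlgebra.coeff (V e) : ℤ →₀ ℤ).support, 0 ≤ n) ∧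
    Filter.Tendsto (fun e : ℤ => jdeg (V e)) Filter.atTop Filter.atTop := by
  classical
  have key := jones_key V hV
  set P : LaurentPolynomial ℤ := V 1 + T 1 * V 0 with hPdef
  set Q : LaurentPolynomial ℤ := T 3 * V 0 - V 1 with hQdef
  have ck : ∀ e n : ℤ, (AddMonoidAlgebra.coeff (V e) : ℤ →₀ ℤ) (n-3) + (AddMonoidAlgebra.coeff (V e) : ℤ →₀ ℤ) (n-1)
      = (AddMonoidAlgebra.coeff P : ℤ →₀ ℤ) (n - 3*e) + (e.negOnePow : ℤ) * (AddMonoidAlgebra.coeff Q : ℤ →₀ ℤ) (n - e) := by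
    intro e n
    have h' : (V e * T 3 + V e * T 1 : LaurentPolynomial ℤ)
        = P * T (3*e) + ((e.negOnePow : ℤ) : LaurentPolynomial ℤ) * (Q * T e) := by
      linear_combination key e
    have h3 := congrArg (fun f : LaurentPolynomial ℤ => (AddMonoidAlgebra.coeff f : ℤ →₀ ℤ) n) h'
    simpa only [add_apply', coeff_mul_T, smul_apply'] using h3
  obtain ⟨α, hα⟩ := exists_lb (AddMonoidAlgebra.coeff P : ℤ →₀ ℤ).support
  obtain ⟨β, hβ⟩ := exists_lb (AddMonoidAlgebra.coeff Q : ℤ →₀ ℤ).support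
  have hsupp : ∀ e : ℤ, max (max (1-α) (1-β)) 0 ≤ e → ∀ n ∈ (AddMonoidAlgebra.coeff (V e) : ℤ →₀ ℤ).support, 0 ≤ n := by
    intro e he n hn
    have he0 : (0:ℤ) ≤ e := le_trans (le_max_right _ _) he
    have heα : 1 - α ≤ e := le_trans (le_trans (le_max_left _ _) (le_max_left _ _)) he
    have heβ : 1 - β ≤ e := le_trans (le_trans (le_max_right _ _) (le_max_left _ _)) he
    have hne' : ((AddMonoidAlgebra.coeff (V e) : ℤ →₀ ℤ)).support.Nonempty := ⟨n, hn⟩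
    set m := (AddMonoidAlgebra.coeff (V e) : ℤ →₀ ℤ).support.min' hne' with hm
    have hmem := Finset.min'_mem _ hne'
    have hmn : m ≤ n := Finset.min'_le _ n hn
    have hVm : (AddMonoidAlgebra.coeff (V e) : ℤ →₀ ℤ) m ≠ 0 := Finsupp.mem_support_iff.mp hmem
    have hlow : (AddMonoidAlgebra.coeff (V e) : ℤ →₀ ℤ) (m-2) = 0 := by
      by_contra hcon
      have h1 : m - 2 ∈ (AddMonoidAlgebra.coeff (V e) : ℤ →₀ ℤ).support := Finsupp.mem_support_iff.mpr hcon
      have := Finset.min'_le _ _ h1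
      omega
    have h := ck e (m+1)
    rw [show m+1-3 = m-2 by ring, show m+1-1 = m by ring, hlow, zero_add] at h
    have hne0 : (AddMonoidAlgebra.coeff P : ℤ →₀ ℤ) (m+1-3*e) ≠ 0 ∨ (AddMonoidAlgebra.coeff Q : ℤ →₀ ℤ) (m+1-e) ≠ 0 := by
      by_contra hcon
      push_neg at hcon
      rw [hcon.1, hcon.2, mul_zero, add_zero] at h
      exact hVm h
    have h0m : 0 ≤ m := by
      rcases hne0 with h' | h'
      · have := hα _ (Finsupp.mem_support_iff.mpr h')
        omega
      · have := hβ _ (Finsupp.mem_support_iff.mpr h')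
        omega
    omega
  have part1 : ∀ N : ℤ, ∃ e₀ : ℤ, ∀ e : ℤ, e₀ ≤ e → (N : WithBot ℤ) ≤ jdeg (V e) := by
    intro N
    have conclude : ∀ (e k : ℤ), k ∈ (AddMonoidAlgebra.coeff (V e) : ℤ →₀ ℤ).support → N ≤ k →
        (N : WithBot ℤ) ≤ jdeg (V e) := by
      intro e k hk hNk
      unfold jdeg
      calc (N : WithBot ℤ) ≤ (k : WithBot ℤ) := by exact_mod_cast hNk
        _ ≤ _ := Finset.le_max hk
    by_cases hP0 : P = 0
    · have hT31 : (T 3 + T 1 : LaurentPolynomial ℤ) ≠ 0 := by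
        intro h0
        have h1 : (AddMonoidAlgebra.coeff (T 3 + T 1 : LaurentPolynomial ℤ) : ℤ →₀ ℤ) 3 = 1 := by
          rw [add_apply']
          show (Finsupp.single (3:ℤ) (1:ℤ)) 3 + (Finsupp.single (1:ℤ) (1:ℤ)) 3 = 1
          simp
        rw [h0] at h1
        simp at h1
      have hQ0 : Q ≠ 0 := by
        intro hq
        have h := key 0
        rw [hP0, hq] at h
        simp only [zero_mul, mul_zero, add_zero, zero_add] at h
        rcases mul_eq_zero.mp h with h' | h'
        · exact hT31 h'
        · exact hne 0 h'
      have hQne : ((AddMonoidAlgebra.coeff Q : ℤ →₀ ℤ)).support.Nonempty := by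
        rw [Finsupp.support_nonempty_iff]
        exact AddMonoidAlgebra.coeff_eq_zero.not.mpr hQ0
      set dQ := (AddMonoidAlgebra.coeff Q : ℤ →₀ ℤ).support.max' hQne with hdQ
      have hdQmem : dQ ∈ (AddMonoidAlgebra.coeff Q : ℤ →₀ ℤ).support := Finset.max'_mem _ _
      refine ⟨max (N+3-dQ) 0, fun e he => ?_⟩
      have he1 : N+3-dQ ≤ e := le_trans (le_max_left _ _) he
      have h := ck e (dQ + e)
      have hP' : (AddMonoidAlgebra.coeff P : ℤ →₀ ℤ) (dQ + e - 3*e) = 0 := by rw [hP0]; rfl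
      rw [hP', zero_add, show dQ + e - e = dQ by ring] at h
      have hrhs : (e.negOnePow : ℤ) * (AddMonoidAlgebra.coeff Q : ℤ →₀ ℤ) dQ ≠ 0 :=
        mul_ne_zero (Units.ne_zero _) (Finsupp.mem_support_iff.mp hdQmem)
      rw [← h] at hrhs
      have : (AddMonoidAlgebra.coeff (V e) : ℤ →₀ ℤ) (dQ + e - 3) ≠ 0 ∨ (AddMonoidAlgebra.coeff (V e) : ℤ →₀ ℤ) (dQ + e - 1) ≠ 0 := by
        by_contra hcon
        push_neg at hcon
        rw [hcon.1, hcon.2, add_zero] at hrhs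
        exact hrhs rfl
      rcases this with h' | h'
      · exact conclude e _ (Finsupp.mem_support_iff.mpr h') (by omega)
      · exact conclude e _ (Finsupp.mem_support_iff.mpr h') (by omega)
    · have hPne : ((AddMonoidAlgebra.coeff P : ℤ →₀ ℤ)).support.Nonempty := by
        rw [Finsupp.support_nonempty_iff]
        exact AddMonoidAlgebra.coeff_eq_zero.not.mpr hP0
      set dP := (AddMonoidAlgebra.coeff P : ℤ →₀ ℤ).support.max' hPne with hdP
      have hdPmem : dP ∈ (AddMonoidAlgebra.coeff P : ℤ →₀ ℤ).support := Finset.max'_mem _ _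
      obtain ⟨γ, hγ⟩ := exists_ub (AddMonoidAlgebra.coeff Q : ℤ →₀ ℤ).support
      refine ⟨max (max (N+3-dP) (γ+1-dP)) 0, fun e he => ?_⟩
      have he0 : (0:ℤ) ≤ e := le_trans (le_max_right _ _) he
      have he1 : N+3-dP ≤ e := le_trans (le_trans (le_max_left _ _) (le_max_left _ _)) he
      have he2 : γ+1-dP ≤ e := le_trans (le_trans (le_max_right _ _) (le_max_left _ _)) he
      have h := ck e (dP + 3*e)
      have hq0 : (AddMonoidAlgebra.coeff Q : ℤ →₀ ℤ) (dP + 3*e - e) = 0 := by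
        by_contra hcon
        have := hγ _ (Finsupp.mem_support_iff.mpr hcon)
        omega
      rw [hq0, mul_zero, add_zero, show dP + 3*e - 3*e = dP by ring] at h
      have hrhs : (AddMonoidAlgebra.coeff P : ℤ →₀ ℤ) dP ≠ 0 := Finsupp.mem_support_iff.mp hdPmem
      rw [← h] at hrhs
      have : (AddMonoidAlgebra.coeff (V e) : ℤ →₀ ℤ) (dP + 3*e - 3) ≠ 0 ∨ (AddMonoidAlgebra.coeff (V e) : ℤ →₀ ℤ) (dP + 3*e - 1) ≠ 0 := by
        by_contra hcon
        push_neg at hcon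
        rw [hcon.1, hcon.2, add_zero] at hrhs
        exact hrhs rfl
      rcases this with h' | h'
      · exact conclude e _ (Finsupp.mem_support_iff.mpr h') (by omega)
      · exact conclude e _ (Finsupp.mem_support_iff.mpr h') (by omega)
  refine ⟨part1, ⟨_, hsupp⟩, ?_⟩
  rw [Filter.tendsto_atTop]
  intro b
  induction b using WithBot.recBotCoe with
  | bot => exact Filter.Eventually.of_forall (fun _ => bot_le)
  | coe N =>
    obtain ⟨e₀, h⟩ := part1 N
    exact Filter.eventually_atTop.mpr ⟨e₀, h⟩
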